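/- Let f ∈ L¹(Ω) be real-valued, let F ⊆ Ω be measurable with |F| = V₀, and let δ > 0 be such that the constraint set M(δ) := {V ∈ M : ‖V − 1_F‖_{L¹(Ω)} = δ} is nonempty. Then the optimisation problem sup_{V ∈ M(δ)} ∫_Ω f V is attained: there exists 𝒱 ∈ M(δ) with ∫_Ω f 𝒱 ≥ ∫_Ω f V for every V ∈ M(δ). -/

import Mathlib

open MeasureTheory

/-- The admissible class `M` of potentials. -/
def Adm (d : ℕ) (Ω : Set (EuclideanSpace ℝ (Fin d))) (V₀ : ℝ) :
    Set (EuclideanSpace ℝ (Fin d) → ℝ) :=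
  { V | Measurable V ∧ (∀ᵐ x ∂(volume.restrict Ω), 0 ≤ V x ∧ V x ≤ 1) ∧
    (∫ x in Ω, V x) = V₀ }

open Filter Topology Set
open scoped ENNReal NNReal

/-- Any measurable subset of Euclidean space of finite volume contains measurable subsets
of every intermediate measure. -/
lemma aux_div {d : ℕ} (hd : 1 ≤ d) (D : Set (EuclideanSpace ℝ (Fin d)))
    (hD : MeasurableSet D) (hDfin : volume D ≠ ⊤) (m : ℝ≥0∞) (hm : m ≤ volume D) :
    ∃ E, MeasurableSet E ∧ E ⊆ D ∧ volume E = m := by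
  haveI : Nonempty (Fin d) := ⟨⟨0, hd⟩⟩
  rcases hm.lt_or_eq with hm' | hm'
  · rcases eq_or_ne m 0 with rfl | hm0
    · exact ⟨∅, MeasurableSet.empty, Set.empty_subset _, measure_empty⟩
    set ψ : ℝ → ℝ≥0∞ := fun r => volume (D ∩ Metric.closedBall 0 r) with hψdef
    have ψmono : ∀ {r s : ℝ}, r ≤ s → ψ r ≤ ψ s := fun h =>
      measure_mono (Set.inter_subset_inter_right _ (Metric.closedBall_subset_closedBall h))
    have ψfin : ∀ r : ℝ, ψ r ≠ ⊤ := fun r =>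
      ne_top_of_le_ne_top hDfin (measure_mono Set.inter_subset_left)
    have ψmeas : ∀ r : ℝ, MeasurableSet (D ∩ Metric.closedBall (0 : EuclideanSpace ℝ (Fin d)) r) :=
      fun r => hD.inter measurableSet_closedBall
    have hS : ∃ n : ℕ, m < ψ n := by
      have h2 : (⋃ n : ℕ, D ∩ Metric.closedBall (0 : EuclideanSpace ℝ (Fin d)) n) = D := by
        rw [← Set.inter_iUnion, Metric.iUnion_closedBall_nat, Set.inter_univ]
      have h1 := tendsto_measure_iUnion_atTop (μ := volume)
        (s := fun n : ℕ => D ∩ Metric.closedBall (0 : EuclideanSpace ℝ (Fin d)) n)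
        (fun a b hab => Set.inter_subset_inter_right _
          (Metric.closedBall_subset_closedBall (by exact_mod_cast hab)))
      rw [h2] at h1
      exact (h1.eventually (eventually_gt_nhds hm')).exists
    obtain ⟨N, hN⟩ := hS
    set S : Set ℝ := {r : ℝ | m ≤ ψ r} with hSdef
    have hSne : S.Nonempty := ⟨N, hN.le⟩
    have hSbdd : BddBelow S := by
      refine ⟨0, fun r hr => ?_⟩
      by_contra hr0
      push_neg at hr0
      have hball : Metric.closedBall (0 : EuclideanSpace ℝ (Fin d)) r = ∅ :=
        Metric.closedBall_eq_empty.2 hr0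
      have hz : ψ r = 0 := by simp [hψdef, hball]
      exact hm0 (le_antisymm (le_trans hr hz.le) zero_le)
    set r₀ : ℝ := sInf S with hr₀
    have upper : m ≤ ψ r₀ := by
      have hseq : ∀ n : ℕ, m ≤ ψ (r₀ + 1 / (n + 1)) := by
        intro n
        obtain ⟨s, hsS, hs⟩ := (csInf_lt_iff hSbdd hSne).1
          (lt_add_of_pos_right r₀ (by positivity : (0:ℝ) < 1 / (n + 1)))
        exact le_trans hsS (ψmono hs.le)
      have hiI : (⋂ n : ℕ, D ∩ Metric.closedBall (0 : EuclideanSpace ℝ (Fin d)) (r₀ + 1/(n+1)))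
          = D ∩ Metric.closedBall 0 r₀ := by
        ext x
        simp only [Set.mem_iInter, Set.mem_inter_iff, Metric.mem_closedBall]
        constructor
        · intro h
          refine ⟨(h 0).1, le_of_forall_pos_le_add fun ε hε => ?_⟩
          obtain ⟨n, hn⟩ := exists_nat_one_div_lt hε
          exact le_trans (h n).2 (by push_cast; linarith)
        · rintro ⟨h1, h2⟩ n
          exact ⟨h1, h2.trans (le_add_of_nonneg_right (by positivity))⟩
      have hmono : Antitone (fun n : ℕ =>
          D ∩ Metric.closedBall (0 : EuclideanSpace ℝ (Fin d)) (r₀ + 1/(n+1))) := by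
        intro a b hab
        apply Set.inter_subset_inter_right
        apply Metric.closedBall_subset_closedBall
        have h1 : ((a:ℝ)+1) ≤ ((b:ℝ)+1) := by exact_mod_cast Nat.succ_le_succ hab
        have := one_div_le_one_div_of_le (by positivity : (0:ℝ) < (a:ℝ)+1) h1
        linarith
      have hT := tendsto_measure_iInter_atTop (μ := volume)
        (fun n => (ψmeas _).nullMeasurableSet) hmono ⟨0, ψfin _⟩
      rw [hiI] at hT
      exact ge_of_tendsto' hT hseq
    have lower : volume (D ∩ Metric.ball (0 : EuclideanSpace ℝ (Fin d)) r₀) ≤ m := by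
      have hseq : ∀ n : ℕ, ψ (r₀ - 1/(n+1)) ≤ m := by
        intro n
        by_contra h
        push_neg at h
        have hmem : (r₀ - 1/(n+1)) ∈ S := h.le
        have := csInf_le hSbdd hmem
        have hpos : (0:ℝ) < 1/(n+1) := by positivity
        rw [← hr₀] at this
        linarith
      have hiU : (⋃ n : ℕ, D ∩ Metric.closedBall (0 : EuclideanSpace ℝ (Fin d)) (r₀ - 1/(n+1)))
          = D ∩ Metric.ball 0 r₀ := by
        ext x
        simp only [Set.mem_iUnion, Set.mem_inter_iff, Metric.mem_closedBall, Metric.mem_ball]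
        constructor
        · rintro ⟨n, h1, h2⟩
          refine ⟨h1, lt_of_le_of_lt h2 ?_⟩
          have hpos : (0:ℝ) < 1/(n+1) := by positivity
          linarith
        · rintro ⟨h1, h2⟩
          obtain ⟨n, hn⟩ := exists_nat_one_div_lt (sub_pos.2 h2)
          exact ⟨n, h1, by linarith⟩
      have hmono : Monotone (fun n : ℕ =>
          D ∩ Metric.closedBall (0 : EuclideanSpace ℝ (Fin d)) (r₀ - 1/(n+1))) := by
        intro a b hab
        apply Set.inter_subset_inter_right
        apply Metric.closedBall_subset_closedBall
        have h1 : ((a:ℝ)+1) ≤ ((b:ℝ)+1) := by exact_mod_cast Nat.succ_le_succ hab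
        have := one_div_le_one_div_of_le (by positivity : (0:ℝ) < (a:ℝ)+1) h1
        linarith
      have hT := tendsto_measure_iUnion_atTop (μ := volume) hmono
      rw [hiU] at hT
      exact le_of_tendsto' hT hseq
    have hsph : ψ r₀ ≤ volume (D ∩ Metric.ball (0 : EuclideanSpace ℝ (Fin d)) r₀) := by
      have h1 : D ∩ Metric.closedBall (0 : EuclideanSpace ℝ (Fin d)) r₀ ⊆
          (D ∩ Metric.ball 0 r₀) ∪ Metric.sphere 0 r₀ := by
        intro x hx
        rcases (Metric.mem_closedBall.1 hx.2).lt_or_eq with h | h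
        · exact Or.inl ⟨hx.1, Metric.mem_ball.2 h⟩
        · exact Or.inr (Metric.mem_sphere.2 h)
      calc ψ r₀ ≤ volume ((D ∩ Metric.ball (0 : EuclideanSpace ℝ (Fin d)) r₀)
              ∪ Metric.sphere 0 r₀) := measure_mono h1
        _ ≤ volume (D ∩ Metric.ball (0 : EuclideanSpace ℝ (Fin d)) r₀)
              + volume (Metric.sphere (0 : EuclideanSpace ℝ (Fin d)) r₀) := measure_union_le _ _
        _ = volume (D ∩ Metric.ball (0 : EuclideanSpace ℝ (Fin d)) r₀) := by
              rw [Measure.addHaar_sphere volume 0 r₀, add_zero]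
    exact ⟨D ∩ Metric.closedBall 0 r₀, ψmeas r₀, Set.inter_subset_left,
      le_antisymm (hsph.trans lower) upper⟩
  · exact ⟨D, hD, subset_rfl, hm'.symm⟩

lemma aux_intV {X : Type*} [MeasurableSpace X] {μ : Measure X} [IsFiniteMeasure μ]
    {V : X → ℝ} (hVm : Measurable V) (hb : ∀ᵐ x ∂μ, 0 ≤ V x ∧ V x ≤ 1) :
    Integrable V μ := by
  refine Integrable.mono' (integrable_const 1) hVm.aestronglyMeasurable ?_
  filter_upwards [hb] with x hx
  rw [Real.norm_eq_abs, abs_of_nonneg hx.1]; exact hx.2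

lemma aux_intMul {X : Type*} [MeasurableSpace X] {μ : Measure X}
    {g V : X → ℝ} (hgi : Integrable g μ) (hVm : Measurable V)
    (hb : ∀ᵐ x ∂μ, 0 ≤ V x ∧ V x ≤ 1) :
    Integrable (fun x => g x * V x) μ := by
  refine Integrable.mono' hgi.norm (hgi.aestronglyMeasurable.mul hVm.aestronglyMeasurable) ?_
  filter_upwards [hb] with x hx
  rw [norm_mul]
  calc ‖g x‖ * ‖V x‖ ≤ ‖g x‖ * 1 := by
        refine mul_le_mul_of_nonneg_left ?_ (norm_nonneg _)
        rw [Real.norm_eq_abs, abs_of_nonneg hx.1]; exact hx.2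
    _ = ‖g x‖ := mul_one _

/-- The bathtub principle: maximisation of `∫ f V` over `0 ≤ V ≤ 1` with `∫ V = c`
is attained at an indicator function. -/
lemma bathtub_max {X : Type*} [MeasurableSpace X] {μ : Measure X}
    (hdiv : ∀ D : Set X, MeasurableSet D → μ D ≠ ⊤ → ∀ m : ℝ≥0∞, m ≤ μ D →
      ∃ E, MeasurableSet E ∧ E ⊆ D ∧ μ E = m)
    {A : Set X} (hA : MeasurableSet A) (hAfin : μ A ≠ ⊤)
    {f : X → ℝ} (hfm : Measurable f) (hfi : IntegrableOn f A μ)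
    {c : ℝ} (hc0 : 0 ≤ c) (hcA : ENNReal.ofReal c ≤ μ A) :
    ∃ E, MeasurableSet E ∧ E ⊆ A ∧ μ E = ENNReal.ofReal c ∧
      ∀ V : X → ℝ, Measurable V →
        (∀ᵐ x ∂(μ.restrict A), 0 ≤ V x ∧ V x ≤ 1) →
        (∫ x in A, V x ∂μ) = c →
        (∫ x in A, f x * V x ∂μ) ≤ ∫ x in A, f x * E.indicator (fun _ => (1:ℝ)) x ∂μ := by
  haveI : IsFiniteMeasure (μ.restrict A) :=
    ⟨by rw [Measure.restrict_apply_univ]; exact hAfin.lt_top⟩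
  -- generic optimality given a threshold structure
  have opt : ∀ (E : Set X) (t : ℝ), MeasurableSet E → E ⊆ A → μ E = ENNReal.ofReal c →
      (A ∩ {x | t < f x} ⊆ E) → (E ⊆ {x | t ≤ f x}) →
      ∀ V : X → ℝ, Measurable V →
        (∀ᵐ x ∂(μ.restrict A), 0 ≤ V x ∧ V x ≤ 1) →
        (∫ x in A, V x ∂μ) = c →
        (∫ x in A, f x * V x ∂μ) ≤ ∫ x in A, f x * E.indicator (fun _ => (1:ℝ)) x ∂μ := by
    intro E t hEm hEA hEvol hE1 hE2 V hVm hVb hVint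
    set I : X → ℝ := E.indicator (fun _ => (1:ℝ)) with hIdef
    have hIm : Measurable I := measurable_const.indicator hEm
    have hIb : ∀ x, 0 ≤ I x ∧ I x ≤ 1 := fun x => by
      by_cases hx : x ∈ E <;>
        simp [hIdef, Set.indicator_of_mem, Set.indicator_of_notMem, hx]
    have hIint : (∫ x in A, I x ∂μ) = c := by
      rw [hIdef, integral_indicator hEm, Measure.restrict_restrict hEm,
        Set.inter_eq_self_of_subset_left hEA, setIntegral_const, measureReal_def, hEvol,
        ENNReal.toReal_ofReal hc0, smul_eq_mul, mul_one]
    have hIi : Integrable I (μ.restrict A) := aux_intV hIm (Eventually.of_forall hIb)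
    have hVi : Integrable V (μ.restrict A) := aux_intV hVm hVb
    have hfIi : Integrable (fun x => f x * I x) (μ.restrict A) :=
      aux_intMul hfi hIm (Eventually.of_forall hIb)
    have hfVi : Integrable (fun x => f x * V x) (μ.restrict A) := aux_intMul hfi hVm hVb
    have key : 0 ≤ ∫ x in A, (f x - t) * (I x - V x) ∂μ := by
      apply integral_nonneg_of_ae
      filter_upwards [hVb, ae_restrict_mem hA] with x hx hxA
      simp only [Pi.zero_apply]
      by_cases hxE : x ∈ E
      · have h1 : t ≤ f x := hE2 hxE
        have h2 : I x = 1 := by simp [hIdef, Set.indicator_of_mem hxE]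
        rw [h2]
        exact mul_nonneg (by linarith) (by linarith [hx.2])
      · have h1 : f x ≤ t := by
          by_contra h
          push_neg at h
          exact hxE (hE1 ⟨hxA, h⟩)
        have h2 : I x = 0 := by simp [hIdef, Set.indicator_of_notMem hxE]
        rw [h2]
        nlinarith [hx.1]
    have expand : (∫ x in A, (f x - t) * (I x - V x) ∂μ)
        = (∫ x in A, f x * I x ∂μ) - (∫ x in A, f x * V x ∂μ)
          - (t * (∫ x in A, I x ∂μ) - t * (∫ x in A, V x ∂μ)) := by
      have hptw : ∀ x, (f x - t) * (I x - V x)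
          = f x * I x - f x * V x - (t * I x - t * V x) := fun x => by ring
      have i1 : Integrable (fun x => f x * I x - f x * V x) (μ.restrict A) := hfIi.sub hfVi
      have itI : Integrable (fun x => t * I x) (μ.restrict A) := hIi.const_mul t
      have itV : Integrable (fun x => t * V x) (μ.restrict A) := hVi.const_mul t
      have i2 : Integrable (fun x => t * I x - t * V x) (μ.restrict A) := itI.sub itV
      simp_rw [hptw]
      rw [integral_sub i1 i2, integral_sub hfIi hfVi, integral_sub itI itV,
        integral_const_mul, integral_const_mul]
    rw [expand, hIint, hVint] at key
    linarith
  rcases eq_or_lt_of_le hc0 with hc | hc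
  · -- c = 0
    refine ⟨∅, MeasurableSet.empty, Set.empty_subset _, by simp [← hc], ?_⟩
    intro V hVm hVb hVint
    have hVi : Integrable V (μ.restrict A) := aux_intV hVm hVb
    have hzero : V =ᵐ[μ.restrict A] 0 := by
      refine (integral_eq_zero_iff_of_nonneg_ae ?_ hVi).1 ?_
      · filter_upwards [hVb] with x hx using hx.1
      · rw [hVint, ← hc]
    have h1 : (fun x => f x * V x) =ᵐ[μ.restrict A] 0 := by
      filter_upwards [hzero] with x hx
      simp only [Pi.zero_apply] at hx ⊢
      rw [hx, mul_zero]
    rw [integral_congr_ae h1]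
    simp
  rcases eq_or_lt_of_le hcA with hcA' | hcA'
  · -- c = μ A
    refine ⟨A, hA, subset_rfl, hcA'.symm, ?_⟩
    intro V hVm hVb hVint
    have hVi : Integrable V (μ.restrict A) := aux_intV hVm hVb
    have hone : ∀ᵐ x ∂(μ.restrict A), V x = 1 := by
      have hsubI : Integrable (fun x => 1 - V x) (μ.restrict A) := (integrable_const 1).sub hVi
      have hint0 : (∫ x in A, (1 - V x) ∂μ) = 0 := by
        rw [integral_sub (integrable_const 1) hVi, hVint, integral_const, measureReal_def,
          Measure.restrict_apply_univ, smul_eq_mul, mul_one, ← hcA',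
          ENNReal.toReal_ofReal hc0, sub_self]
      have hW : (fun x => 1 - V x) =ᵐ[μ.restrict A] 0 := by
        refine (integral_eq_zero_iff_of_nonneg_ae ?_ hsubI).1 hint0
        filter_upwards [hVb] with x hx
        simp only [Pi.zero_apply]
        linarith [hx.2]
      filter_upwards [hW] with x hx
      simp only [Pi.zero_apply] at hx
      linarith
    have h1 : (fun x => f x * V x) =ᵐ[μ.restrict A]
        (fun x => f x * A.indicator (fun _ => (1:ℝ)) x) := by
      filter_upwards [hone, ae_restrict_mem hA] with x hx hxA
      rw [hx, Set.indicator_of_mem hxA]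
    rw [integral_congr_ae h1]
  -- main case : 0 < c < μ A
  have hc' : (0:ℝ≥0∞) < ENNReal.ofReal c := ENNReal.ofReal_pos.2 hc
  set g : ℝ → ℝ≥0∞ := fun t => μ (A ∩ {x | t < f x}) with hgdef
  have gmeas : ∀ t : ℝ, MeasurableSet (A ∩ {x | t < f x}) := fun t =>
    hA.inter (measurableSet_lt measurable_const hfm)
  have gmono : ∀ {s t : ℝ}, s ≤ t → g t ≤ g s := by
    intro s t h
    refine measure_mono (Set.inter_subset_inter_right _ (fun x hx => ?_))
    simp only [Set.mem_setOf_eq] at hx ⊢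
    linarith
  have gfin : ∀ t, g t ≠ ⊤ := fun t =>
    ne_top_of_le_ne_top hAfin (measure_mono Set.inter_subset_left)
  have hS1 : ∃ n : ℕ, g n < ENNReal.ofReal c := by
    have h2 : (⋂ n : ℕ, A ∩ {x | (n:ℝ) < f x}) = ∅ := by
      ext x
      simp only [Set.mem_iInter, Set.mem_inter_iff, Set.mem_setOf_eq, Set.mem_empty_iff_false,
        iff_false, not_forall, not_and, not_lt]
      obtain ⟨n, hn⟩ := exists_nat_gt (f x)
      exact ⟨n, fun _ => hn.le⟩
    have hmono : Antitone (fun n : ℕ => A ∩ {x | (n:ℝ) < f x}) := by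
      intro a b hab
      refine Set.inter_subset_inter_right _ (fun x hx => ?_)
      simp only [Set.mem_setOf_eq] at hx ⊢
      have : (a:ℝ) ≤ (b:ℝ) := by exact_mod_cast hab
      linarith
    have hT := tendsto_measure_iInter_atTop (μ := μ)
      (fun n => (gmeas _).nullMeasurableSet) hmono ⟨0, gfin _⟩
    rw [h2] at hT
    simp only [measure_empty] at hT
    exact (hT.eventually (eventually_lt_nhds hc')).exists
  obtain ⟨N, hN⟩ := hS1
  set S : Set ℝ := {t : ℝ | g t ≤ ENNReal.ofReal c} with hSdef
  have hSne : S.Nonempty := ⟨N, hN.le⟩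
  have hSbdd : BddBelow S := by
    have hU : (⋃ n : ℕ, A ∩ {x | -(n:ℝ) < f x}) = A := by
      ext x
      simp only [Set.mem_iUnion, Set.mem_inter_iff, Set.mem_setOf_eq]
      constructor
      · rintro ⟨n, h1, _⟩; exact h1
      · intro h
        obtain ⟨n, hn⟩ := exists_nat_gt (-(f x))
        exact ⟨n, h, by linarith⟩
    have hmono : Monotone (fun n : ℕ => A ∩ {x | -(n:ℝ) < f x}) := by
      intro a b hab
      refine Set.inter_subset_inter_right _ (fun x hx => ?_)
      simp only [Set.mem_setOf_eq] at hx ⊢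
      have : (a:ℝ) ≤ (b:ℝ) := by exact_mod_cast hab
      linarith
    have hT := tendsto_measure_iUnion_atTop (μ := μ) hmono
    rw [hU] at hT
    obtain ⟨n₀, hn₀⟩ := (hT.eventually (eventually_gt_nhds hcA')).exists
    refine ⟨-(n₀:ℝ), fun r hr => ?_⟩
    by_contra hcon
    push_neg at hcon
    have : g (-(n₀:ℝ)) ≤ g r := gmono hcon.le
    have hgr : g r ≤ ENNReal.ofReal c := hr
    exact absurd (le_trans this hgr) (not_le.2 hn₀)
  set t₀ : ℝ := sInf S with ht₀
  have hgt : g t₀ ≤ ENNReal.ofReal c := by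
    have hseq : ∀ n : ℕ, g (t₀ + 1/(n+1)) ≤ ENNReal.ofReal c := by
      intro n
      obtain ⟨s, hsS, hs⟩ := (csInf_lt_iff hSbdd hSne).1
        (lt_add_of_pos_right t₀ (by positivity : (0:ℝ) < 1/(n+1)))
      exact le_trans (gmono hs.le) hsS
    have hiU : (⋃ n : ℕ, A ∩ {x | t₀ + 1/(n+1) < f x}) = A ∩ {x | t₀ < f x} := by
      ext x
      simp only [Set.mem_iUnion, Set.mem_inter_iff, Set.mem_setOf_eq]
      constructor
      · rintro ⟨n, h1, h2⟩
        have hpos : (0:ℝ) < 1/(n+1) := by positivity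
        exact ⟨h1, by linarith⟩
      · rintro ⟨h1, h2⟩
        obtain ⟨n, hn⟩ := exists_nat_one_div_lt (sub_pos.2 h2)
        exact ⟨n, h1, by linarith⟩
    have hmono : Monotone (fun n : ℕ => A ∩ {x | t₀ + 1/(n+1) < f x}) := by
      intro a b hab
      refine Set.inter_subset_inter_right _ (fun x hx => ?_)
      simp only [Set.mem_setOf_eq] at hx ⊢
      have h1 : ((a:ℝ)+1) ≤ ((b:ℝ)+1) := by exact_mod_cast Nat.succ_le_succ hab
      have := one_div_le_one_div_of_le (by positivity : (0:ℝ) < (a:ℝ)+1) h1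
      linarith
    have hT := tendsto_measure_iUnion_atTop (μ := μ) hmono
    rw [hiU] at hT
    exact le_of_tendsto' hT hseq
  have hge : ENNReal.ofReal c ≤ μ (A ∩ {x | t₀ ≤ f x}) := by
    have hseq : ∀ n : ℕ, ENNReal.ofReal c ≤ g (t₀ - 1/(n+1)) := by
      intro n
      have hpos : (0:ℝ) < 1/(n+1) := by positivity
      have hnot : (t₀ - 1/(n+1)) ∉ S :=
        notMem_of_lt_csInf (by rw [← ht₀]; linarith) hSbdd
      rw [hSdef] at hnot
      simp only [Set.mem_setOf_eq, not_le] at hnot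
      exact hnot.le
    have hiI : (⋂ n : ℕ, A ∩ {x | t₀ - 1/(n+1) < f x}) = A ∩ {x | t₀ ≤ f x} := by
      ext x
      simp only [Set.mem_iInter, Set.mem_inter_iff, Set.mem_setOf_eq]
      constructor
      · intro h
        refine ⟨(h 0).1, ?_⟩
        by_contra hcon
        push_neg at hcon
        obtain ⟨n, hn⟩ := exists_nat_one_div_lt (sub_pos.2 hcon)
        have := (h n).2
        linarith
      · rintro ⟨h1, h2⟩ n
        have hpos : (0:ℝ) < 1/(n+1) := by positivity
        exact ⟨h1, by linarith⟩
    have hmono : Antitone (fun n : ℕ => A ∩ {x | t₀ - 1/(n+1) < f x}) := by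
      intro a b hab
      refine Set.inter_subset_inter_right _ (fun x hx => ?_)
      simp only [Set.mem_setOf_eq] at hx ⊢
      have h1 : ((a:ℝ)+1) ≤ ((b:ℝ)+1) := by exact_mod_cast Nat.succ_le_succ hab
      have := one_div_le_one_div_of_le (by positivity : (0:ℝ) < (a:ℝ)+1) h1
      linarith
    have hT := tendsto_measure_iInter_atTop (μ := μ)
      (fun n => (gmeas _).nullMeasurableSet) hmono ⟨0, gfin _⟩
    rw [hiI] at hT
    exact ge_of_tendsto' hT hseq
  -- the level set
  set D : Set X := A ∩ {x | f x = t₀} with hDdef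
  have hDm : MeasurableSet D := hA.inter (measurableSet_eq_fun hfm measurable_const)
  have hDfin : μ D ≠ ⊤ := ne_top_of_le_ne_top hAfin (measure_mono Set.inter_subset_left)
  have hunion : A ∩ {x | t₀ ≤ f x} = (A ∩ {x | t₀ < f x}) ∪ D := by
    ext x
    simp only [Set.mem_union, Set.mem_inter_iff, Set.mem_setOf_eq, hDdef]
    constructor
    · rintro ⟨h1, h2⟩
      rcases h2.lt_or_eq with h | h
      · exact Or.inl ⟨h1, h⟩
      · exact Or.inr ⟨h1, h.symm⟩
    · rintro (⟨h1, h2⟩ | ⟨h1, h2⟩)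
      · exact ⟨h1, h2.le⟩
      · exact ⟨h1, h2.ge⟩
  have hdisj : Disjoint (A ∩ {x | t₀ < f x}) D := by
    rw [Set.disjoint_left]
    rintro x ⟨_, hx2⟩ ⟨_, hx4⟩
    simp only [Set.mem_setOf_eq] at hx2 hx4
    exact absurd hx4 (ne_of_gt hx2)
  have hmeasD : ENNReal.ofReal c - g t₀ ≤ μ D := by
    have h1 : μ (A ∩ {x | t₀ ≤ f x}) = g t₀ + μ D := by
      rw [hunion, measure_union hdisj hDm]
    rw [tsub_le_iff_left]
    calc ENNReal.ofReal c ≤ μ (A ∩ {x | t₀ ≤ f x}) := hge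
      _ = g t₀ + μ D := h1
  obtain ⟨E', hE'm, hE'D, hE'vol⟩ := hdiv D hDm hDfin (ENNReal.ofReal c - g t₀) hmeasD
  set E : Set X := (A ∩ {x | t₀ < f x}) ∪ E' with hEdef
  have hEm : MeasurableSet E := (gmeas t₀).union hE'm
  have hEA : E ⊆ A := Set.union_subset Set.inter_subset_left (hE'D.trans Set.inter_subset_left)
  have hEvol : μ E = ENNReal.ofReal c := by
    have hdisj2 : Disjoint (A ∩ {x | t₀ < f x}) E' :=
      hdisj.mono_right hE'D
    rw [hEdef, measure_union hdisj2 hE'm, hE'vol]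
    exact add_tsub_cancel_of_le hgt
  refine ⟨E, hEm, hEA, hEvol, ?_⟩
  refine opt E t₀ hEm hEA hEvol (fun x hx => Or.inl hx) ?_
  rintro x (hx | hx)
  · have h : t₀ < f x := hx.2
    exact h.le
  · have h : f x = t₀ := (hE'D hx).2
    exact h.ge

/-- The optimisation problem `sup { ∫_Ω f V : V ∈ M, ‖V − 1_F‖_{L¹(Ω)} = δ }`
is attained. -/
theorem bathtub_constrained_sup_attained
    (d : ℕ) (hd : 1 ≤ d)
    (Ω : Set (EuclideanSpace ℝ (Fin d))) (hΩo : IsOpen Ω) (hΩne : Ω.Nonempty)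
    (hΩb : Bornology.IsBounded Ω)
    (V₀ : ℝ) (hV₀ : 0 < V₀) (hV₀' : V₀ < (volume Ω).toReal)
    (f : EuclideanSpace ℝ (Fin d) → ℝ) (hf : IntegrableOn f Ω)
    (F : Set (EuclideanSpace ℝ (Fin d))) (hF : MeasurableSet F) (hFΩ : F ⊆ Ω)
    (hFvol : volume F = ENNReal.ofReal V₀)
    (δ : ℝ) (hδ : 0 < δ)
    (hne : ∃ V ∈ Adm d Ω V₀,
      (∫ x in Ω, |V x - F.indicator (fun _ => (1 : ℝ)) x|) = δ) :
    ∃ 𝒱 ∈ Adm d Ω V₀,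
      (∫ x in Ω, |𝒱 x - F.indicator (fun _ => (1 : ℝ)) x|) = δ ∧
      ∀ V ∈ Adm d Ω V₀,
        (∫ x in Ω, |V x - F.indicator (fun _ => (1 : ℝ)) x|) = δ →
        (∫ x in Ω, f x * V x) ≤ ∫ x in Ω, f x * 𝒱 x := by
  classical
  have hΩm : MeasurableSet Ω := hΩo.measurableSet
  have hΩfin : volume Ω ≠ ⊤ := hΩb.measure_lt_top.ne
  have hFfin : volume F ≠ ⊤ := ne_top_of_le_ne_top hΩfin (measure_mono hFΩ)
  have hDfin : volume (Ω \ F) ≠ ⊤ := ne_top_of_le_ne_top hΩfin (measure_mono Set.diff_subset)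
  have hDm : MeasurableSet (Ω \ F) := hΩm.diff hF
  haveI : IsFiniteMeasure (volume.restrict Ω) :=
    ⟨by rw [Measure.restrict_apply_univ]; exact hΩfin.lt_top⟩
  haveI : IsFiniteMeasure (volume.restrict F) :=
    ⟨by rw [Measure.restrict_apply_univ]; exact hFfin.lt_top⟩
  haveI : IsFiniteMeasure (volume.restrict (Ω \ F)) :=
    ⟨by rw [Measure.restrict_apply_univ]; exact hDfin.lt_top⟩
  -- measurable representative of f
  obtain ⟨g, hgm, hfg⟩ : ∃ g, Measurable g ∧ f =ᵐ[volume.restrict Ω] g :=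
    ⟨hf.1.mk f, hf.1.stronglyMeasurable_mk.measurable, hf.1.ae_eq_mk⟩
  have hgi : IntegrableOn g Ω := (integrable_congr hfg).1 hf
  -- expansion of the constraint
  have expand : ∀ V : EuclideanSpace ℝ (Fin d) → ℝ, Measurable V →
      (∀ᵐ x ∂(volume.restrict Ω), 0 ≤ V x ∧ V x ≤ 1) →
      (∫ x in Ω, |V x - F.indicator (fun _ => (1:ℝ)) x|)
        = (∫ x in Ω, V x) + V₀ - 2 * (∫ x in F, V x) := by
    intro V hVm hVb
    have h1 : (fun x => |V x - F.indicator (fun _ => (1:ℝ)) x|)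
        =ᵐ[volume.restrict Ω]
        (fun x => V x + F.indicator (fun _ => (1:ℝ)) x - 2 * F.indicator V x) := by
      filter_upwards [hVb] with x hx
      by_cases hxF : x ∈ F
      · simp only [Set.indicator_of_mem hxF]
        rw [abs_of_nonpos (by linarith [hx.2])]
        ring
      · simp only [Set.indicator_of_notMem hxF]
        rw [abs_of_nonneg (by linarith [hx.1])]
        ring
    have hVi : Integrable V (volume.restrict Ω) := aux_intV hVm hVb
    have hIndi : Integrable (fun x => F.indicator (fun _ => (1:ℝ)) x) (volume.restrict Ω) :=
      aux_intV (measurable_const.indicator hF) (Eventually.of_forall fun x => by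
        by_cases hxF : x ∈ F <;>
          simp [Set.indicator_of_mem, Set.indicator_of_notMem, hxF])
    have hIndVi : Integrable (fun x => F.indicator V x) (volume.restrict Ω) := by
      refine aux_intV (hVm.indicator hF) ?_
      filter_upwards [hVb] with x hx
      by_cases hxF : x ∈ F
      · simpa [Set.indicator_of_mem hxF] using hx
      · simp [Set.indicator_of_notMem hxF]
    have hAdd : Integrable (fun x => V x + F.indicator (fun _ => (1:ℝ)) x)
        (volume.restrict Ω) := hVi.add hIndi
    have hMul : Integrable (fun x => 2 * F.indicator V x) (volume.restrict Ω) :=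
      hIndVi.const_mul 2
    rw [integral_congr_ae h1, integral_sub hAdd hMul,
      integral_add hVi hIndi, integral_const_mul]
    have h2 : (∫ x in Ω, F.indicator (fun _ => (1:ℝ)) x) = V₀ := by
      rw [integral_indicator hF, Measure.restrict_restrict hF,
        Set.inter_eq_self_of_subset_left hFΩ, setIntegral_const, measureReal_def, hFvol,
        ENNReal.toReal_ofReal hV₀.le, smul_eq_mul, mul_one]
    have h3 : (∫ x in Ω, F.indicator V x) = ∫ x in F, V x := by
      rw [integral_indicator hF, Measure.restrict_restrict hF,
        Set.inter_eq_self_of_subset_left hFΩ]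
    rw [h2, h3]
  -- splitting integrals over Ω into F and Ω \ F
  have hsplit : ∀ h : EuclideanSpace ℝ (Fin d) → ℝ, IntegrableOn h Ω →
      (∫ x in Ω, h x) = (∫ x in F, h x) + ∫ x in Ω \ F, h x := by
    intro h hi
    have := setIntegral_union (disjoint_sdiff_right) hDm (hi.mono_set hFΩ)
      (hi.mono_set Set.diff_subset)
    rwa [Set.union_diff_cancel hFΩ] at this
  set c₁ : ℝ := V₀ - δ/2 with hc₁def
  set c₂ : ℝ := δ/2 with hc₂def
  have hchar : ∀ V : EuclideanSpace ℝ (Fin d) → ℝ, Measurable V →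
      (∀ᵐ x ∂(volume.restrict Ω), 0 ≤ V x ∧ V x ≤ 1) →
      (∫ x in Ω, V x) = V₀ →
      ((∫ x in Ω, |V x - F.indicator (fun _ => (1:ℝ)) x|) = δ ↔
        (∫ x in F, V x) = c₁ ∧ (∫ x in Ω \ F, V x) = c₂) := by
    intro V hVm hVb hVI
    have he := expand V hVm hVb
    have hs := hsplit V (aux_intV hVm hVb)
    rw [hVI] at he hs
    constructor
    · intro h
      rw [he] at h
      constructor
      · rw [hc₁def]; linarith
      · rw [hc₂def]; rw [hc₁def] at *; linarith
    · rintro ⟨h1, h2⟩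
      rw [he, h1, hc₁def]
      ring
  obtain ⟨W, ⟨hWm, hWb, hWI⟩, hWδ⟩ := hne
  have hW12 := (hchar W hWm hWb hWI).1 hWδ
  have hWbF : ∀ᵐ x ∂(volume.restrict F), 0 ≤ W x ∧ W x ≤ 1 :=
    ae_restrict_of_ae_restrict_of_subset hFΩ hWb
  have hWbD : ∀ᵐ x ∂(volume.restrict (Ω \ F)), 0 ≤ W x ∧ W x ≤ 1 :=
    ae_restrict_of_ae_restrict_of_subset Set.diff_subset hWb
  have hc₁0 : 0 ≤ c₁ := by
    rw [← hW12.1]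
    exact integral_nonneg_of_ae (by filter_upwards [hWbF] with x hx using hx.1)
  have hc₂0 : 0 ≤ c₂ := by rw [hc₂def]; linarith
  have hbound : ∀ s : Set (EuclideanSpace ℝ (Fin d)), MeasurableSet s → volume s ≠ ⊤ →
      (∀ᵐ x ∂(volume.restrict s), 0 ≤ W x ∧ W x ≤ 1) →
      ENNReal.ofReal (∫ x in s, W x) ≤ volume s := by
    intro s hs hsfin hbs
    haveI : IsFiniteMeasure (volume.restrict s) :=
      ⟨by rw [Measure.restrict_apply_univ]; exact hsfin.lt_top⟩
    have h1 : (∫ x in s, W x) ≤ (volume s).toReal := by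
      have h2 := integral_mono_ae (aux_intV hWm hbs) (integrable_const 1)
        (by filter_upwards [hbs] with x hx using hx.2)
      simpa [integral_const, Measure.restrict_apply_univ, measureReal_def] using h2
    calc ENNReal.ofReal (∫ x in s, W x) ≤ ENNReal.ofReal (volume s).toReal :=
          ENNReal.ofReal_le_ofReal h1
      _ = volume s := ENNReal.ofReal_toReal hsfin
  have hc₁F : ENNReal.ofReal c₁ ≤ volume F := by
    rw [← hW12.1]; exact hbound F hF hFfin hWbF
  have hc₂D : ENNReal.ofReal c₂ ≤ volume (Ω \ F) := by
    rw [← hW12.2]; exact hbound _ hDm hDfin hWbD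
  obtain ⟨E₁, hE₁m, hE₁F, hE₁vol, hE₁opt⟩ :=
    bathtub_max (fun D hD hfin m hm => aux_div hd D hD hfin m hm) hF hFfin hgm
      (hgi.mono_set hFΩ) hc₁0 hc₁F
  obtain ⟨E₂, hE₂m, hE₂D, hE₂vol, hE₂opt⟩ :=
    bathtub_max (fun D hD hfin m hm => aux_div hd D hD hfin m hm) hDm hDfin hgm
      (hgi.mono_set Set.diff_subset) hc₂0 hc₂D
  set 𝒱 : EuclideanSpace ℝ (Fin d) → ℝ := (E₁ ∪ E₂).indicator (fun _ => (1:ℝ)) with h𝒱def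
  have h𝒱m : Measurable 𝒱 := measurable_const.indicator (hE₁m.union hE₂m)
  have h𝒱b : ∀ x, 0 ≤ 𝒱 x ∧ 𝒱 x ≤ 1 := fun x => by
    by_cases hx : x ∈ E₁ ∪ E₂ <;>
      simp [h𝒱def, Set.indicator_of_mem, Set.indicator_of_notMem, hx]
  have heqF : Set.EqOn 𝒱 (E₁.indicator (fun _ => (1:ℝ))) F := by
    intro x hxF
    by_cases hx1 : x ∈ E₁
    · simp [h𝒱def, Set.indicator_of_mem, hx1, Set.mem_union, Or.inl hx1]
    · have hx2 : x ∉ E₂ := fun h => (hE₂D h).2 hxF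
      have hx12 : x ∉ E₁ ∪ E₂ := by
        simp only [Set.mem_union]
        push_neg
        exact ⟨hx1, hx2⟩
      simp [h𝒱def, Set.indicator_of_notMem, hx1, hx12]
  have heqD : Set.EqOn 𝒱 (E₂.indicator (fun _ => (1:ℝ))) (Ω \ F) := by
    intro x hxD
    by_cases hx2 : x ∈ E₂
    · simp [h𝒱def, Set.indicator_of_mem, hx2, Set.mem_union, Or.inr hx2]
    · have hx1 : x ∉ E₁ := fun h => hxD.2 (hE₁F h)
      have hx12 : x ∉ E₁ ∪ E₂ := by
        simp only [Set.mem_union]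
        push_neg
        exact ⟨hx1, hx2⟩
      simp [h𝒱def, Set.indicator_of_notMem, hx2, hx12]
  have hVF : (∫ x in F, 𝒱 x) = c₁ := by
    rw [setIntegral_congr_fun hF heqF, integral_indicator hE₁m, Measure.restrict_restrict hE₁m,
      Set.inter_eq_self_of_subset_left hE₁F, setIntegral_const, measureReal_def, hE₁vol,
      ENNReal.toReal_ofReal hc₁0, smul_eq_mul, mul_one]
  have hVD : (∫ x in Ω \ F, 𝒱 x) = c₂ := by
    rw [setIntegral_congr_fun hDm heqD, integral_indicator hE₂m, Measure.restrict_restrict hE₂m,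
      Set.inter_eq_self_of_subset_left hE₂D, setIntegral_const, measureReal_def, hE₂vol,
      ENNReal.toReal_ofReal hc₂0, smul_eq_mul, mul_one]
  have hVI : (∫ x in Ω, 𝒱 x) = V₀ := by
    rw [hsplit 𝒱 (aux_intV h𝒱m (Eventually.of_forall h𝒱b)), hVF, hVD, hc₁def, hc₂def]
    ring
  have h𝒱mem : 𝒱 ∈ Adm d Ω V₀ := ⟨h𝒱m, Eventually.of_forall h𝒱b, hVI⟩
  have h𝒱δ : (∫ x in Ω, |𝒱 x - F.indicator (fun _ => (1:ℝ)) x|) = δ :=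
    (hchar 𝒱 h𝒱m (Eventually.of_forall h𝒱b) hVI).2 ⟨hVF, hVD⟩
  refine ⟨𝒱, h𝒱mem, h𝒱δ, ?_⟩
  intro V hV hVδ
  obtain ⟨hVm, hVb, hVI'⟩ := hV
  have hV12 := (hchar V hVm hVb hVI').1 hVδ
  have hfgV : (fun x => f x * V x) =ᵐ[volume.restrict Ω] fun x => g x * V x := by
    filter_upwards [hfg] with x hx
    rw [hx]
  have hfg𝒱 : (fun x => f x * 𝒱 x) =ᵐ[volume.restrict Ω] fun x => g x * 𝒱 x := by
    filter_upwards [hfg] with x hx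
    rw [hx]
  rw [integral_congr_ae hfgV, integral_congr_ae hfg𝒱]
  have hgVi : IntegrableOn (fun x => g x * V x) Ω := aux_intMul hgi hVm hVb
  have hg𝒱i : IntegrableOn (fun x => g x * 𝒱 x) Ω :=
    aux_intMul hgi h𝒱m (Eventually.of_forall h𝒱b)
  rw [hsplit _ hgVi, hsplit _ hg𝒱i]
  have hR1 : (∫ x in F, g x * 𝒱 x) = ∫ x in F, g x * E₁.indicator (fun _ => (1:ℝ)) x :=
    setIntegral_congr_fun hF (fun x hx => by rw [heqF hx])
  have hR2 : (∫ x in Ω \ F, g x * 𝒱 x)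
      = ∫ x in Ω \ F, g x * E₂.indicator (fun _ => (1:ℝ)) x :=
    setIntegral_congr_fun hDm (fun x hx => by rw [heqD hx])
  have hle1 : (∫ x in F, g x * V x) ≤ ∫ x in F, g x * E₁.indicator (fun _ => (1:ℝ)) x :=
    hE₁opt V hVm (ae_restrict_of_ae_restrict_of_subset hFΩ hVb) hV12.1
  have hle2 : (∫ x in Ω \ F, g x * V x)
      ≤ ∫ x in Ω \ F, g x * E₂.indicator (fun _ => (1:ℝ)) x :=
    hE₂opt V hVm (ae_restrict_of_ae_restrict_of_subset Set.diff_subset hVb) hV12.2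
  rw [hR1, hR2]
  exact add_le_add hle1 hle2
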